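/- Let n ≥ 1 and k ≥ 1. Every n-periodic k-triangulation on ℤ contains an edge of length exactly kn; that is, there exists an integer v with [v, v+kn] ∈ T. -/

import Mathlib

/- Edges on the universal cover of the half-cylinder, modeled by the integers.
   An edge is an unordered pair of distinct integers, represented as an ordered
   pair `(a, b)` with `a < b` (validity). -/

namespace Multitriangulation

abbrev Edge := ℤ × ℤ

/-- Translate an edge by `t`: `[a,b] + t = [a+t, b+t]`. -/
def shift (e : Edge) (t : ℤ) : Edge := (e.1 + t, e.2 + t)

/-- Two edges (as unordered pairs of integers) cross:
their endpoints strictly interleave. -/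
def Crosses (e f : Edge) : Prop :=
  (min e.1 e.2 < min f.1 f.2 ∧ min f.1 f.2 < max e.1 e.2 ∧ max e.1 e.2 < max f.1 f.2) ∨
  (min f.1 f.2 < min e.1 e.2 ∧ min e.1 e.2 < max f.1 f.2 ∧ max f.1 f.2 < max e.1 e.2)

/-- A finite set of edges is an `l`-crossing if it consists of `l` pairwise
crossing edges. -/
def IsCrossing (l : ℕ) (S : Finset Edge) : Prop :=
  S.card = l ∧ ∀ e ∈ S, ∀ f ∈ S, e ≠ f → Crosses e f

/-- A set of edges is `l`-crossing-free if no `l` of its edges pairwise cross. -/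
def CrossingFree (l : ℕ) (E : Set Edge) : Prop :=
  ¬ ∃ S : Finset Edge, ↑S ⊆ E ∧ IsCrossing l S

/-- A set of edges is `n`-periodic if `e ∈ E ↔ e + n ∈ E`. -/
def Periodic (n : ℕ) (E : Set Edge) : Prop := ∀ e, e ∈ E ↔ shift e (n : ℤ) ∈ E

/-- All members are genuine edges `[a,b]` with `a < b`. -/
def ValidEdges (E : Set Edge) : Prop := ∀ e ∈ E, e.1 < e.2

/-- An `n`-periodic `k`-triangulation on `ℤ`: an `n`-periodic
`(k+1)`-crossing-free set of edges that is maximal under inclusion among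
`n`-periodic `(k+1)`-crossing-free sets of edges. -/
def IsTriangulation (n k : ℕ) (T : Set Edge) : Prop :=
  ValidEdges T ∧ Periodic n T ∧ CrossingFree (k+1) T ∧
  ∀ T', ValidEdges T' → Periodic n T' → CrossingFree (k+1) T' → T ⊆ T' → T' = T

lemma crosses_iff' {e f : Edge} (hab : e.1 < e.2) (hcd : f.1 < f.2) :
    Crosses e f ↔ (e.1 < f.1 ∧ f.1 < e.2 ∧ e.2 < f.2) ∨ (f.1 < e.1 ∧ e.1 < f.2 ∧ f.2 < e.2) := by
  unfold Crosses
  simp only [min_eq_left hab.le, max_eq_right hab.le, min_eq_left hcd.le, max_eq_right hcd.le]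

lemma crosses_symm {e f : Edge} (h : Crosses e f) : Crosses f e := Or.symm h

lemma crosses_irrefl (e : Edge) : ¬ Crosses e e := by
  rintro (⟨h, _, _⟩ | ⟨h, _, _⟩) <;> exact lt_irrefl _ h

/-- at most k pairwise-crossing edges may be chosen among the translates of a
length-`k*n` edge -/
lemma orbit_span {n k : ℕ} (hn : 1 ≤ n) (hk : 1 ≤ k) (v : ℤ) (S : Finset Edge)
    (hsub : ∀ e ∈ S, ∃ j : ℤ, e = (v + j * (n:ℤ) - (k:ℤ) * (n:ℤ), v + j * (n:ℤ)))
    (hcard : S.card = k+1)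
    (hpair : ∀ e ∈ S, ∀ f ∈ S, e ≠ f → Crosses e f) : False := by
  classical
  set N : ℤ := (n:ℤ) with hN
  have hN1 : (1:ℤ) ≤ N := by rw [hN]; exact_mod_cast hn
  have hK1 : (1:ℤ) ≤ (k:ℤ) := by exact_mod_cast hk
  have hKN1 : (1:ℤ) ≤ (k:ℤ) * N := by nlinarith
  set jf : Edge → ℤ := fun e => (e.2 - v) / N with hjf
  have hjval : ∀ e ∈ S, ∀ j : ℤ, e = (v + j * N - (k:ℤ) * N, v + j * N) → jf e = j := by
    intro e _ j hj
    have h2 : e.2 = v + j * N := by rw [hj]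
    simp only [hjf, h2]
    rw [add_sub_cancel_left]
    exact Int.mul_ediv_cancel j (by omega)
  have hinj : Set.InjOn jf ↑S := by
    intro e he e' he' heq
    obtain ⟨j, hj⟩ := hsub e he
    obtain ⟨j', hj'⟩ := hsub e' he'
    rw [hjval e he j hj, hjval e' he' j' hj'] at heq
    rw [hj, hj', heq]
  set J := S.image jf with hJ
  have hJcard : J.card = k+1 := by rw [hJ, Finset.card_image_of_injOn hinj, hcard]
  have hJne : J.Nonempty := by rw [← Finset.card_pos, hJcard]; omega
  obtain ⟨emax, hemaxS, hemaxj⟩ := Finset.mem_image.mp (J.max'_mem hJne)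
  obtain ⟨emin, heminS, heminj⟩ := Finset.mem_image.mp (J.min'_mem hJne)
  have hIcc : J ⊆ Finset.Icc (jf emin) (jf emax) := by
    rw [heminj, hemaxj]
    intro x hx
    exact Finset.mem_Icc.mpr ⟨J.min'_le x hx, J.le_max' x hx⟩
  have hcardle : (k:ℤ) ≤ jf emax - jf emin := by
    have h1 := Finset.card_le_card hIcc
    rw [hJcard, Int.card_Icc] at h1
    omega
  obtain ⟨j2, hj2⟩ := hsub emax hemaxS
  obtain ⟨j1, hj1⟩ := hsub emin heminS
  rw [hjval emax hemaxS j2 hj2, hjval emin heminS j1 hj1] at hcardle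
  have hne : emin ≠ emax := by
    intro h
    rw [h, hj2] at hj1
    have : j1 = j2 := by
      have h2 : v + j1 * N = v + j2 * N := congrArg Prod.snd hj1.symm
      have h3 : j1 * N = j2 * N := by linarith
      exact mul_right_cancel₀ (by omega) h3
    omega
  have hc := hpair emin heminS emax hemaxS hne
  rw [hj1, hj2] at hc
  rw [crosses_iff' (by dsimp; linarith) (by dsimp; linarith)] at hc
  dsimp at hc
  have hjj : (k:ℤ) * N ≤ (j2 - j1) * N := by
    apply mul_le_mul_of_nonneg_right _ (by linarith)
    omega
  rcases hc with ⟨h1, h2, h3⟩ | ⟨h1, h2, h3⟩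
  · nlinarith
  · nlinarith


lemma mem_shift_mul {n : ℕ} {T : Set Edge} (hper : Periodic n T) (j : ℤ) :
    ∀ e : Edge, e ∈ T ↔ shift e (j * (n:ℤ)) ∈ T := by
  induction j using Int.induction_on with
  | zero => intro e; simp [shift]
  | succ i ih =>
      intro e
      have h1 : shift e ((i + 1) * (n:ℤ)) = shift (shift e (i * (n:ℤ))) (n:ℤ) := by
        simp only [shift, Prod.mk.injEq]; constructor <;> ring
      rw [h1]
      exact (ih e).trans (hper _)
  | pred i ih =>
      intro e
      have h1 : shift e ((-i) * (n:ℤ)) = shift (shift e ((-i - 1) * (n:ℤ))) (n:ℤ) := by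
        simp only [shift, Prod.mk.injEq]; constructor <;> ring
      have h2 := (hper (shift e ((-i - 1) * (n:ℤ)))).symm
      rw [← h1] at h2
      exact (ih e).trans h2

/-- Main combinatorial lemma: if `T` is `(k+1)`-crossing-free with all lengths at
most `L`, attained by an edge with top `dstar`, and `L < k*n`, then adding the
whole orbit of the length-`k*n` edge with top `dstar` stays crossing-free. -/
lemma union_crossing_free {n k : ℕ} (hn : 1 ≤ n) (hk : 1 ≤ k) {T : Set Edge}
    (hval : ValidEdges T) (hper : Periodic n T) (hcf : CrossingFree (k+1) T)
    (dstar L : ℤ) (hestar : (dstar - L, dstar) ∈ T)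
    (hL1 : 1 ≤ L) (hLkn : L < (k:ℤ) * n)
    (hLmax : ∀ e ∈ T, e.2 - e.1 ≤ L) :
    CrossingFree (k+1)
      (T ∪ {e : Edge | ∃ j : ℤ, e = (dstar + j * (n:ℤ) - (k:ℤ) * (n:ℤ), dstar + j * (n:ℤ))}) := by
  classical
  set N : ℤ := (n:ℤ) with hN
  have hN1 : (1:ℤ) ≤ N := by rw [hN]; exact_mod_cast hn
  have hK1 : (1:ℤ) ≤ (k:ℤ) := by exact_mod_cast hk
  have hKN1 : (1:ℤ) ≤ (k:ℤ) * N := by nlinarith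
  rintro ⟨S, hsub, hcard, hpair⟩
  have hO : ∀ e ∈ S, e ∉ T → (e.1 = e.2 - (k:ℤ) * N ∧ ∃ j : ℤ, e.2 = dstar + j * N) := by
    intro e heS heT
    rcases hsub heS with h | h
    · exact absurd h heT
    · obtain ⟨j, hj⟩ := h
      constructor
      · rw [hj]
      · exact ⟨j, by rw [hj]⟩
  by_cases hTS : ∃ u ∈ S, u ∈ T
  swap
  · -- no edge of S is in T : span argument
    push_neg at hTS
    apply orbit_span hn hk dstar S ?_ hcard hpair
    intro e heS
    rcases hsub heS with h | h
    · exact absurd h (hTS e heS)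
    · exact h
  obtain ⟨u0, hu0S, hu0T⟩ := hTS
  set F := S.filter (fun e => e ∈ T) with hFdef
  have hFne : F.Nonempty := ⟨u0, by simp [hFdef, hu0S, hu0T]⟩
  obtain ⟨us, husF, hmaxX⟩ := F.exists_max_image (fun e => e.1) hFne
  have husS : us ∈ S := (Finset.mem_filter.mp husF).1
  have husT : us ∈ T := (Finset.mem_filter.mp husF).2
  have hXmax : ∀ u ∈ S, u ∈ T → u.1 ≤ us.1 := by
    intro u huS huT
    exact hmaxX u (by simp [hFdef, huS, huT])
  have hXY : us.1 < us.2 := hval us husT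
  have hYXL : us.2 - us.1 ≤ L := hLmax us husT
  -- every T-edge of S has top above X
  have hF0 : ∀ u ∈ S, u ∈ T → us.1 < u.2 := by
    intro u huS huT
    by_cases h : u = us
    · rw [h]; exact hXY
    · have hc := hpair us husS u huS (fun hh => h hh.symm)
      rw [crosses_iff' hXY (hval u huT)] at hc
      have := hval u huT
      rcases hc with ⟨h1, h2, h3⟩ | ⟨h1, h2, h3⟩ <;> linarith
  -- the crossing dichotomy between a T-edge and an orbit edge
  have hdich : ∀ u ∈ S, u ∈ T → ∀ f ∈ S, f ∉ T →
      ((u.1 < f.2 - (k:ℤ) * N ∧ f.2 - (k:ℤ) * N < u.2 ∧ u.2 < f.2) ∨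
       (f.2 - (k:ℤ) * N < u.1 ∧ u.1 < f.2 ∧ f.2 < u.2)) := by
    intro u huS huT f hfS hfT
    have hne : u ≠ f := fun h => hfT (h ▸ huT)
    have hc := hpair u huS f hfS hne
    have hf1 : f.1 = f.2 - (k:ℤ) * N := (hO f hfS hfT).1
    rw [crosses_iff' (hval u huT) (by rw [hf1]; linarith)] at hc
    rw [hf1] at hc
    exact hc
  -- the replacement point for orbit edges
  set zf : Edge → ℤ := fun f => if us.1 < f.2 - (k:ℤ) * N then f.2 - (k:ℤ) * N else f.2 with hzf
  have hz : ∀ f ∈ S, f ∉ T → (us.1 < zf f ∧ zf f < us.2 ∧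
      ∀ u ∈ S, u ∈ T → Crosses u (zf f - L, zf f)) := by
    intro f hfS hfT
    have hdus := hdich us husS husT f hfS hfT
    by_cases hB : us.1 < f.2 - (k:ℤ) * N
    · have hzv : zf f = f.2 - (k:ℤ) * N := if_pos hB
      rcases hdus with ⟨h1, h2, h3⟩ | ⟨h1, h2, h3⟩
      swap
      · exact absurd hB (by linarith)
      refine ⟨by rw [hzv]; exact hB, by rw [hzv]; exact h2, ?_⟩
      intro u huS huT
      have hul := hLmax u huT
      rcases hdich u huS huT f hfS hfT with ⟨g1, g2, g3⟩ | ⟨g1, g2, g3⟩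
      · -- u.1 < w < u.2 with w = f.2 - kn
        rw [crosses_iff' (hval u huT) (by dsimp; linarith)]
        right
        rw [hzv]
        dsimp
        refine ⟨by linarith, by linarith, by linarith⟩
      · exact absurd (hXmax u huS huT) (by linarith)
    · have hzv : zf f = f.2 := if_neg hB
      rcases hdus with ⟨h1, h2, h3⟩ | ⟨h1, h2, h3⟩
      · exact absurd h1 hB
      refine ⟨by rw [hzv]; exact h2, by rw [hzv]; exact h3, ?_⟩
      intro u huS huT
      have hul := hLmax u huT
      have hu2 := hF0 u huS huT
      rcases hdich u huS huT f hfS hfT with ⟨g1, g2, g3⟩ | ⟨g1, g2, g3⟩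
      · -- u below f : use first disjunct
        rw [crosses_iff' (hval u huT) (by dsimp; linarith)]
        left
        rw [hzv]
        dsimp
        refine ⟨by linarith, by linarith, by linarith⟩
      · rw [crosses_iff' (hval u huT) (by dsimp; linarith)]
        right
        rw [hzv]
        dsimp
        refine ⟨by linarith, by linarith, by linarith⟩
  -- distinctness of replacement points
  have hzne : ∀ f ∈ S, f ∉ T → ∀ f' ∈ S, f' ∉ T → f ≠ f' → zf f ≠ zf f' := by
    intro f hfS hfT f' hfS' hfT' hne
    have hc := hpair f hfS f' hfS' hne
    have hf1 : f.1 = f.2 - (k:ℤ) * N := (hO f hfS hfT).1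
    have hf1' : f'.1 = f'.2 - (k:ℤ) * N := (hO f' hfS' hfT').1
    rw [crosses_iff' (by rw [hf1]; linarith) (by rw [hf1']; linarith)] at hc
    rw [hf1, hf1'] at hc
    have hdiff : f.2 ≠ f'.2 ∧ f.2 - f'.2 < (k:ℤ) * N ∧ f'.2 - f.2 < (k:ℤ) * N := by
      rcases hc with ⟨h1, h2, h3⟩ | ⟨h1, h2, h3⟩
      · exact ⟨by linarith, by linarith, by linarith⟩
      · exact ⟨by linarith, by linarith, by linarith⟩
    simp only [hzf]
    by_cases hB : us.1 < f.2 - (k:ℤ) * N <;> by_cases hB' : us.1 < f'.2 - (k:ℤ) * N <;>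
      simp only [if_pos, if_neg, hB, hB', if_true, if_false] <;> intro hcon <;> omega
  -- the replacement function
  set phi : Edge → Edge := fun e => if e ∈ T then e else (zf e - L, zf e) with hphi
  have hcrossphi : ∀ e ∈ S, ∀ e' ∈ S, e ≠ e' → Crosses (phi e) (phi e') := by
    have key : ∀ e ∈ S, ∀ e' ∈ S, e ≠ e' → e ∈ T → Crosses (phi e) (phi e') := by
      intro e heS e' heS' hne heT
      by_cases heT' : e' ∈ T
      · simp only [hphi, if_pos heT, if_pos heT']
        exact hpair e heS e' heS' hne
      · simp only [hphi, if_pos heT, if_neg heT']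
        exact (hz e' heS' heT').2.2 e heS heT
    intro e heS e' heS' hne
    by_cases heT : e ∈ T
    · exact key e heS e' heS' hne heT
    by_cases heT' : e' ∈ T
    · exact crosses_symm (key e' heS' e heS hne.symm heT')
    -- both orbit edges
    simp only [hphi, if_neg heT, if_neg heT']
    have h1 := hz e heS heT
    have h2 := hz e' heS' heT'
    have hne2 := hzne e heS heT e' heS' heT' hne
    rw [crosses_iff' (by dsimp; linarith) (by dsimp; linarith)]
    dsimp
    rcases lt_trichotomy (zf e) (zf e') with h | h | h
    · left; refine ⟨by linarith, by linarith, by linarith⟩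
    · exact absurd h hne2
    · right; refine ⟨by linarith, by linarith, by linarith⟩
  -- the image is a (k+1)-crossing inside T
  apply hcf
  refine ⟨S.image phi, ?_, ?_, ?_⟩
  · intro x hx
    simp only [Finset.coe_image, Set.mem_image, Finset.mem_coe] at hx
    obtain ⟨e, heS, rfl⟩ := hx
    by_cases heT : e ∈ T
    · simp only [hphi, if_pos heT]; exact heT
    · simp only [hphi, if_neg heT]
      obtain ⟨j, hj⟩ := (hO e heS heT).2
      by_cases hB : us.1 < e.2 - (k:ℤ) * N
      · have hzv : zf e = e.2 - (k:ℤ) * N := if_pos hB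
        have heq : ((zf e - L, zf e) : Edge) = shift (dstar - L, dstar) ((j - (k:ℤ)) * N) := by
          simp only [shift, Prod.mk.injEq, hzv, hj]
          constructor <;> ring
        rw [heq]
        exact (mem_shift_mul hper (j - (k:ℤ)) _).mp hestar
      · have hzv : zf e = e.2 := if_neg hB
        have heq : ((zf e - L, zf e) : Edge) = shift (dstar - L, dstar) (j * N) := by
          simp only [shift, Prod.mk.injEq, hzv, hj]
          exact ⟨by linarith, trivial⟩
        rw [heq]
        exact (mem_shift_mul hper j _).mp hestar
  · rw [Finset.card_image_of_injOn, hcard]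
    intro e heS e' heS' heq
    by_contra hne
    have := hcrossphi e heS e' heS' hne
    rw [heq] at this
    exact crosses_irrefl _ this
  · intro a ha b hb hab
    obtain ⟨e, heS, rfl⟩ := Finset.mem_image.mp ha
    obtain ⟨e', heS', rfl⟩ := Finset.mem_image.mp hb
    exact hcrossphi e heS e' heS' (fun h => hab (by rw [h]))




lemma length_le_kn {n k : ℕ} (hn : 1 ≤ n) {T : Set Edge}
    (hval : ValidEdges T) (hper : Periodic n T) (hcf : CrossingFree (k+1) T) :
    ∀ e ∈ T, e.2 - e.1 ≤ (k:ℤ) * n := by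
  intro e he
  by_contra hlong
  push_neg at hlong
  set N : ℤ := (n:ℤ) with hN
  have hN1 : (1:ℤ) ≤ N := by rw [hN]; exact_mod_cast hn
  have e1 : e.1 < e.2 := hval e he
  have hcr : ∀ i j : ℕ, i < j → j ≤ k →
      Crosses (e.1 + (i:ℤ) * N, e.2 + (i:ℤ) * N) (e.1 + (j:ℤ) * N, e.2 + (j:ℤ) * N) := by
    intro i j hij hjk
    have hij' : (i:ℤ) < (j:ℤ) := by exact_mod_cast hij
    have hjk' : (j:ℤ) - (i:ℤ) ≤ (k:ℤ) := by
      have h1 : (j:ℤ) ≤ (k:ℤ) := by exact_mod_cast hjk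
      have h2 : (0:ℤ) ≤ i := Int.ofNat_nonneg i
      omega
    have hml : ((j:ℤ) - i) * N ≤ (k:ℤ) * N :=
      mul_le_mul_of_nonneg_right hjk' (by linarith)
    rw [crosses_iff' (by dsimp; linarith) (by dsimp; linarith)]
    dsimp
    left
    refine ⟨by nlinarith, by nlinarith, by nlinarith⟩
  set F : ℕ → Edge := fun j => (e.1 + (j:ℤ) * N, e.2 + (j:ℤ) * N) with hF
  have hsub : ↑((Finset.range (k+1)).image F) ⊆ T := by
    intro x hx
    simp only [Finset.coe_image, Set.mem_image, Finset.mem_coe, Finset.mem_range] at hx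
    obtain ⟨j, _, rfl⟩ := hx
    exact (mem_shift_mul hper (j:ℤ) e).mp he
  apply hcf
  refine ⟨(Finset.range (k+1)).image F, hsub, ?_, ?_⟩
  · rw [Finset.card_image_of_injOn, Finset.card_range]
    intro i _ j _ hFij
    have h1 : e.1 + (i:ℤ) * N = e.1 + (j:ℤ) * N := congrArg Prod.fst hFij
    have h2 : (i:ℤ) * N = (j:ℤ) * N := by linarith
    have h3 : (i:ℤ) = j := mul_right_cancel₀ (by linarith) h2
    exact_mod_cast h3
  · intro a ha b hb hab
    simp only [Finset.mem_image, Finset.mem_range] at ha hb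
    obtain ⟨i, hi, rfl⟩ := ha
    obtain ⟨j, hj, rfl⟩ := hb
    rcases lt_trichotomy i j with h | h | h
    · exact hcr i j h (by omega)
    · exact absurd (by rw [h]) hab
    · exact crosses_symm (hcr j i h (by omega))


/-- Every `n`-periodic `k`-triangulation on `ℤ` contains an edge
of length exactly `kn`. -/
theorem exists_edge_of_length_kn (n k : ℕ) (hn : 1 ≤ n) (hk : 1 ≤ k)
    (T : Set Edge) (hT : IsTriangulation n k T) :
    ∃ v : ℤ, (v, v + (k : ℤ) * n) ∈ T := by
  classical
  obtain ⟨hval, hper, hcf, hmax⟩ := hT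
  by_contra hcon
  push_neg at hcon
  set N : ℤ := (n:ℤ) with hN
  have hN1 : (1:ℤ) ≤ N := by rw [hN]; exact_mod_cast hn
  have hK1 : (1:ℤ) ≤ (k:ℤ) := by exact_mod_cast hk
  have hKN1 : (1:ℤ) ≤ (k:ℤ) * N := by nlinarith
  rcases Set.eq_empty_or_nonempty T with hE | ⟨e0, he0⟩
  · -- T is empty : the orbit of (0 - k*n, 0) could be added
    set O : Set Edge := {e | ∃ j : ℤ, e = ((0:ℤ) + j * N - (k:ℤ) * N, (0:ℤ) + j * N)} with hOdef
    have hOval : ValidEdges O := by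
      rintro e ⟨j, rfl⟩; dsimp; linarith
    have hOper : Periodic n O := by
      intro e
      constructor
      · rintro ⟨j, rfl⟩
        refine ⟨j + 1, ?_⟩
        simp only [shift, Prod.mk.injEq]
        constructor <;> ring
      · rintro ⟨j, hj⟩
        refine ⟨j - 1, ?_⟩
        have h1 : e.1 + N = 0 + j * N - (k:ℤ) * N := congrArg Prod.fst hj
        have h2 : e.2 + N = 0 + j * N := congrArg Prod.snd hj
        have he : e = (e.1, e.2) := rfl
        rw [he, Prod.mk.injEq]
        constructor
        · have hrn : (0:ℤ) + (j - 1) * N - (k:ℤ) * N = 0 + j * N - (k:ℤ) * N - N := by ring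
          rw [hrn]; linarith
        · have hrn : (0:ℤ) + (j - 1) * N = 0 + j * N - N := by ring
          rw [hrn]; linarith
    have hOcf : CrossingFree (k+1) O := by
      rintro ⟨S, hsub, hcard, hpair⟩
      exact orbit_span hn hk 0 S (fun e he => hsub he) hcard hpair
    have heq := hmax O hOval hOper hOcf (by rw [hE]; exact Set.empty_subset _)
    have hmem : ((0:ℤ) + 0 * N - (k:ℤ) * N, (0:ℤ) + 0 * N) ∈ O := ⟨0, rfl⟩
    rw [heq, hE] at hmem
    exact hmem
  · -- T nonempty : take an edge of greatest length
    have hbdd : ∃ b : ℤ, ∀ l : ℤ, (∃ e, e ∈ T ∧ e.2 - e.1 = l) → l ≤ b := by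
      refine ⟨(k:ℤ) * N, ?_⟩
      rintro l ⟨e, heT, rfl⟩
      exact length_le_kn hn hval hper hcf e heT
    obtain ⟨L, ⟨estar, hestarT, hestarL⟩, hLub⟩ :=
      Int.exists_greatest_of_bdd hbdd ⟨e0.2 - e0.1, e0, he0, rfl⟩
    have hL1 : (1:ℤ) ≤ L := by
      have := hval estar hestarT; omega
    have hLle : L ≤ (k:ℤ) * N := by
      rw [← hestarL]; exact length_le_kn hn hval hper hcf estar hestarT
    have hLkn : L < (k:ℤ) * N := by
      rcases lt_or_eq_of_le hLle with h | h
      · exact h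
      · exfalso
        apply hcon estar.1
        have hes : estar = (estar.1, estar.1 + (k:ℤ) * N) := by
          have : estar = (estar.1, estar.2) := rfl
          rw [this, Prod.mk.injEq]
          exact ⟨rfl, by omega⟩
        rw [← hes]
        exact hestarT
    set dstar := estar.2 with hdstar
    have hestar' : (dstar - L, dstar) ∈ T := by
      have hes : estar = (dstar - L, dstar) := by
        have : estar = (estar.1, estar.2) := rfl
        rw [this, Prod.mk.injEq]
        exact ⟨by omega, rfl⟩
      rw [← hes]
      exact hestarT
    have hLmax : ∀ e ∈ T, e.2 - e.1 ≤ L := fun e he => hLub _ ⟨e, he, rfl⟩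
    have hUcf := union_crossing_free hn hk hval hper hcf dstar L hestar' hL1 hLkn hLmax
    set O : Set Edge := {e : Edge | ∃ j : ℤ, e = (dstar + j * N - (k:ℤ) * N, dstar + j * N)} with hOdef
    have hUval : ValidEdges (T ∪ O) := by
      rintro e (h | ⟨j, rfl⟩)
      · exact hval e h
      · dsimp; linarith
    have hUper : Periodic n (T ∪ O) := by
      intro e
      constructor
      · rintro (h | ⟨j, rfl⟩)
        · exact Or.inl ((hper e).mp h)
        · refine Or.inr ⟨j + 1, ?_⟩
          simp only [shift, Prod.mk.injEq]
          constructor <;> ring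
      · rintro (h | ⟨j, hj⟩)
        · exact Or.inl ((hper e).mpr h)
        · refine Or.inr ⟨j - 1, ?_⟩
          have h1 : e.1 + N = dstar + j * N - (k:ℤ) * N := congrArg Prod.fst hj
          have h2 : e.2 + N = dstar + j * N := congrArg Prod.snd hj
          have he : e = (e.1, e.2) := rfl
          rw [he, Prod.mk.injEq]
          constructor
          · have hrn : dstar + (j - 1) * N - (k:ℤ) * N = dstar + j * N - (k:ℤ) * N - N := by ring
            rw [hrn]; linarith
          · have hrn : dstar + (j - 1) * N = dstar + j * N - N := by ring
            rw [hrn]; linarith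
    have heq := hmax (T ∪ O) hUval hUper hUcf Set.subset_union_left
    have hmem : (dstar + 0 * N - (k:ℤ) * N, dstar + 0 * N) ∈ T ∪ O := Or.inr ⟨0, rfl⟩
    rw [heq] at hmem
    apply hcon (dstar - (k:ℤ) * N)
    have hpr : ((dstar - (k:ℤ) * N, dstar - (k:ℤ) * N + (k:ℤ) * N) : Edge)
        = (dstar + 0 * N - (k:ℤ) * N, dstar + 0 * N) := by
      rw [Prod.mk.injEq]
      constructor <;> ring
    rw [hpr]
    exact hmem

end Multitriangulation
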